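/- Let n ≥ 1 and let A_1, …, A_m and B_1, …, B_m be nonzero linear subspaces of F_2^{n+1} (representing nonempty projective subspaces of the n-dimensional projective space over F_2). Assume the pair of families is cross-intersecting in the projective sense: A_i ∩ B_i = {0} for each 1 ≤ i ≤ m and A_i ∩ B_j ≠ {0} whenever 1 ≤ i < j ≤ m. Then m ≤ 2^{n+1} − 2. -/

import Mathlib

open Finset

namespace HegedusAux

variable {n : ℕ}

abbrev V (n : ℕ) := Fin (n + 1) → ZMod 2

lemma add_self (v : V n) : v + v = 0 := by
  funext j
  exact CharTwo.add_self_eq_zero _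

lemma add_add_cancel (u v : V n) : u + v + v = u := by
  rw [add_assoc, add_self, add_zero]

open Classical in
/-- Indicator function of a submodule. -/
noncomputable def ind (S : Submodule (ZMod 2) (V n)) : V n → ZMod 2 := fun v => if v ∈ S then 1 else 0

lemma conv_ind (A B : Submodule (ZMod 2) (V n)) (x : V n) :
    ∑ y : V n, ind A y * ind B (x + y)
      = (Nat.card (A ⊓ B : Submodule (ZMod 2) (V n)) : ZMod 2) * ind (A ⊔ B) x := by
  classical
  have hterm : ∀ y : V n, ind A y * ind B (x + y)
      = if y ∈ A ∧ x + y ∈ B then (1 : ZMod 2) else 0 := by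
    intro y
    simp only [ind, ite_and, ite_mul, one_mul, zero_mul]
  simp only [hterm]
  rw [Finset.sum_boole]
  by_cases hx : x ∈ A ⊔ B
  · obtain ⟨a, ha, b, hb, hab⟩ := Submodule.mem_sup.mp hx
    have hcard : #{y ∈ (univ : Finset (V n)) | y ∈ A ∧ x + y ∈ B}
        = #{z ∈ (univ : Finset (V n)) | z ∈ A ⊓ B} := by
      refine Finset.card_nbij' (fun y => y + a) (fun z => z + a) ?_ ?_ ?_ ?_
      · intro y hy
        simp only [Finset.mem_coe, mem_filter, mem_univ, true_and] at hy ⊢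
        obtain ⟨h1, h2⟩ := hy
        refine Submodule.mem_inf.mpr ⟨A.add_mem h1 ha, ?_⟩
        have heq : y + a = (x + y) + b := by
          rw [← hab]
          have h3 : a + b + y + b = y + a + (b + b) := by abel
          rw [h3, add_self, add_zero]
        rw [heq]
        exact B.add_mem h2 hb
      · intro z hz
        simp only [Finset.mem_coe, mem_filter, mem_univ, true_and] at hz ⊢
        obtain ⟨h1, h2⟩ := Submodule.mem_inf.mp hz
        refine ⟨A.add_mem h1 ha, ?_⟩
        have heq : x + (z + a) = b + z := by
          rw [← hab]
          have h3 : a + b + (z + a) = b + z + (a + a) := by abel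
          rw [h3, add_self, add_zero]
        rw [heq]
        exact B.add_mem hb h2
      · intro y _; exact add_add_cancel y a
      · intro z _; exact add_add_cancel z a
    rw [hcard]
    have hind : ind (A ⊔ B) x = 1 := by simp [ind, hx]
    rw [hind, mul_one, Nat.card_eq_fintype_card, Fintype.card_subtype]
  · have hempty : ({y ∈ (univ : Finset (V n)) | y ∈ A ∧ x + y ∈ B} : Finset (V n)) = ∅ := by
      refine Finset.filter_eq_empty_iff.mpr ?_
      rintro y - ⟨h1, h2⟩
      exact hx (Submodule.mem_sup.mpr ⟨y, h1, x + y, h2, by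
        have h3 : y + (x + y) = x + (y + y) := by abel
        rw [h3, add_self, add_zero]⟩)
    have hind : ind (A ⊔ B) x = 0 := by simp [ind, hx]
    rw [hempty, hind, mul_zero]
    simp

lemma card_cast_eq_zero (S : Submodule (ZMod 2) (V n)) (h : S ≠ ⊥) :
    ((Nat.card S : ZMod 2)) = 0 := by
  classical
  haveI : Fintype S := Fintype.ofFinite _
  have hcard : Fintype.card S = Fintype.card (ZMod 2) ^ Module.finrank (ZMod 2) S :=
    Module.card_eq_pow_finrank
  have h1 : Module.finrank (ZMod 2) S ≠ 0 := fun h0 => h (Submodule.finrank_eq_zero.mp h0)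
  rw [Nat.card_eq_fintype_card, hcard, ZMod.card, Nat.cast_pow]
  have h2 : ((2 : ℕ) : ZMod 2) = 0 := by decide
  rw [h2, zero_pow h1]

lemma conv_eq_zero {A B : Submodule (ZMod 2) (V n)} (h : A ⊓ B ≠ ⊥) (x : V n) :
    ∑ y : V n, ind A y * ind B (x + y) = 0 := by
  rw [conv_ind, card_cast_eq_zero _ h, zero_mul]

lemma conv_eq {A B : Submodule (ZMod 2) (V n)} (h : A ⊓ B = ⊥) (x : V n) :
    ∑ y : V n, ind A y * ind B (x + y) = ind (A ⊔ B) x := by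
  rw [conv_ind, h]
  have h1 : Nat.card (⊥ : Submodule (ZMod 2) (V n)) = 1 := by
    rw [Nat.card_eq_one_iff_unique]
    exact ⟨inferInstance, inferInstance⟩
  rw [h1, Nat.cast_one, one_mul]

end HegedusAux

open HegedusAux Finset

/-- Hegedűs' conjecture for `q = 2`: if `A₁, …, Aₘ` and `B₁, …, Bₘ` are nonzero linear
subspaces of `F_2^{n+1}` (nonempty projective subspaces of `n`-dimensional projective space
over `F_2`) with `Aᵢ ∩ Bᵢ = {0}` for all `i` and `Aᵢ ∩ Bⱼ ≠ {0}` for `i < j`, then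
`m ≤ 2^{n+1} − 2`. -/
theorem projective_cross_intersecting_bound_two
    (n m : ℕ) (hn : 1 ≤ n)
    (A B : Fin m → Submodule (ZMod 2) (Fin (n + 1) → ZMod 2))
    (hA : ∀ i, A i ≠ ⊥) (hB : ∀ i, B i ≠ ⊥)
    (hdisj : ∀ i, A i ⊓ B i = ⊥)
    (hcross : ∀ i j, i < j → A i ⊓ B j ≠ ⊥) :
    m ≤ 2 ^ (n + 1) - 2 := by
  classical
  -- the extended family of submodules
  set A' : Fin m ⊕ Fin 2 → Submodule (ZMod 2) (V n) := Sum.elim A ![⊥, ⊤] with hA'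
  set g : Fin m ⊕ Fin 2 → (V n → ZMod 2) := fun i => ind (A' i) with hg
  have hli : LinearIndependent (ZMod 2) g := by
    rw [Fintype.linearIndependent_iff]
    intro c hc
    -- evaluate the combination pointwise
    have h0 : ∀ y : V n, ∑ i, c i * g i y = 0 := by
      intro y
      have := congrFun hc y
      simpa [Finset.sum_apply] using this
    -- convolution of the combination with any indicator vanishes
    have key : ∀ (S : Submodule (ZMod 2) (V n)) (x : V n),
        ∑ i, c i * (∑ y : V n, g i y * ind S (x + y)) = 0 := by
      intro S x
      have : ∑ i, c i * (∑ y : V n, g i y * ind S (x + y))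
          = ∑ y : V n, (∑ i, c i * g i y) * ind S (x + y) := by
        simp_rw [Finset.mul_sum, ← mul_assoc]
        rw [Finset.sum_comm]
        simp_rw [Finset.sum_mul]
      rw [this]
      simp [h0]
    -- all `A`-coefficients vanish
    have hAc : ∀ i : Fin m, c (Sum.inl i) = 0 := by
      by_contra hne
      push_neg at hne
      obtain ⟨i₁, hi₁⟩ := hne
      set Sf : Finset (Fin m) := {i ∈ univ | c (Sum.inl i) ≠ 0} with hSf
      have hSne : Sf.Nonempty := ⟨i₁, by simp [hSf, hi₁]⟩
      set i₀ : Fin m := Sf.max' hSne with hi₀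
      have hi₀mem : c (Sum.inl i₀) ≠ 0 := by
        have := Sf.max'_mem hSne
        simpa [hSf] using this
      have hgt : ∀ j : Fin m, i₀ < j → c (Sum.inl j) = 0 := by
        intro j hj
        by_contra hcj
        exact absurd (Sf.le_max' j (by simp [hSf, hcj])) (not_le.mpr hj)
      -- pick a nonzero element of A i₀
      obtain ⟨a, haA, ha0⟩ := (Submodule.ne_bot_iff (A i₀)).mp (hA i₀)
      have hkey := key (B i₀) a
      -- compute the sum
      rw [Fintype.sum_sum_type] at hkey
      have hsum1 : ∑ j : Fin m, c (Sum.inl j) * (∑ y : V n, g (Sum.inl j) y * ind (B i₀) (a + y))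
          = c (Sum.inl i₀) * ind (A i₀ ⊔ B i₀) a := by
        rw [Finset.sum_eq_single i₀]
        · have : g (Sum.inl i₀) = ind (A i₀) := rfl
          rw [this, conv_eq (hdisj i₀) a]
        · intro j _ hji
          rcases lt_or_gt_of_ne hji with h | h
          · have : g (Sum.inl j) = ind (A j) := rfl
            rw [this, conv_eq_zero (hcross j i₀ h) a, mul_zero]
          · rw [hgt j h, zero_mul]
        · intro h; exact absurd (mem_univ i₀) h
      have hsum2 : ∑ k : Fin 2, c (Sum.inr k) * (∑ y : V n, g (Sum.inr k) y * ind (B i₀) (a + y))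
          = c (Sum.inr 0) * ind (B i₀) a := by
        rw [Fin.sum_univ_two]
        have hb0 : g (Sum.inr 0) = ind (⊥ : Submodule (ZMod 2) (V n)) := by
          simp [hg, hA']
        have hb1 : g (Sum.inr 1) = ind (⊤ : Submodule (ZMod 2) (V n)) := by
          simp [hg, hA']
        rw [hb0, hb1]
        rw [conv_eq (by rw [bot_inf_eq]) a, conv_eq_zero (by rw [top_inf_eq]; exact hB i₀) a]
        rw [bot_sup_eq, mul_zero, add_zero]
      rw [hsum1, hsum2] at hkey
      have hindA : ind (A i₀ ⊔ B i₀) a = 1 := by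
        simp [ind, Submodule.mem_sup_left haA]
      have hindB : ind (B i₀) a = 0 := by
        have : a ∉ B i₀ := by
          intro hmem
          have : a ∈ A i₀ ⊓ B i₀ := Submodule.mem_inf.mpr ⟨haA, hmem⟩
          rw [hdisj i₀] at this
          exact ha0 (Submodule.mem_bot _ |>.mp this)
        simp [ind, this]
      rw [hindA, hindB, mul_one, mul_zero, add_zero] at hkey
      exact hi₀mem hkey
    -- now only the two extra coefficients remain
    have hc' : ∀ x : V n, c (Sum.inr 0) * ind (⊥ : Submodule (ZMod 2) (V n)) x
        + c (Sum.inr 1) * ind (⊤ : Submodule (ZMod 2) (V n)) x = 0 := by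
      intro x
      have := h0 x
      rw [Fintype.sum_sum_type, Fin.sum_univ_two] at this
      have hz : ∑ j : Fin m, c (Sum.inl j) * g (Sum.inl j) x = 0 := by
        apply Finset.sum_eq_zero
        intro j _
        rw [hAc j, zero_mul]
      rw [hz, zero_add] at this
      have hb0 : g (Sum.inr 0) = ind (⊥ : Submodule (ZMod 2) (V n)) := by simp [hg, hA']
      have hb1 : g (Sum.inr 1) = ind (⊤ : Submodule (ZMod 2) (V n)) := by simp [hg, hA']
      rw [hb0, hb1] at this
      exact this
    have hv : (fun _ => 1 : V n) ≠ 0 := by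
      intro h
      have := congrFun h 0
      simp at this
    have h1 : c (Sum.inr 1) = 0 := by
      have := hc' (fun _ => 1)
      have hbot : ind (⊥ : Submodule (ZMod 2) (V n)) (fun _ => 1) = 0 := by
        simp [ind, Submodule.mem_bot, hv]
      have htop : ind (⊤ : Submodule (ZMod 2) (V n)) (fun _ => 1) = 1 := by
        simp [ind]
      rw [hbot, htop, mul_zero, mul_one, zero_add] at this
      exact this
    have h2 : c (Sum.inr 0) = 0 := by
      have := hc' 0
      have hbot : ind (⊥ : Submodule (ZMod 2) (V n)) (0 : V n) = 1 := by
        simp [ind]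
      have htop : ind (⊤ : Submodule (ZMod 2) (V n)) (0 : V n) = 1 := by
        simp [ind]
      rw [hbot, htop, h1] at this
      simpa using this
    intro i
    rcases i with j | k
    · exact hAc j
    · fin_cases k
      · exact h2
      · exact h1
  have hcard := hli.fintype_card_le_finrank
  rw [Module.finrank_fintype_fun_eq_card] at hcard
  have hVcard : Fintype.card (V n) = 2 ^ (n + 1) := by
    rw [Fintype.card_fun, ZMod.card, Fintype.card_fin]
  rw [hVcard, Fintype.card_sum, Fintype.card_fin, Fintype.card_fin] at hcard
  omega
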